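/- For the Kraus operators {A_k} of a channel N and the difference channel M = N − D, the quantity η² := Σ_{k,l} |Tr(A_k† A_l)|² − d_in/d_out equals Σ_{x,y=1}^{d_in} ‖M(|x⟩⟨y|)‖₂², and also equals d_in²·‖J_N − I/(d_in d_out)‖₂². -/

import Mathlib

open Matrix BigOperators

/-- The channel with Kraus operators `A`. -/
noncomputable def krausMap {K din dout : ℕ} (A : Fin K → Matrix (Fin dout) (Fin din) ℂ)
    (ρ : Matrix (Fin din) (Fin din) ℂ) : Matrix (Fin dout) (Fin dout) ℂ :=
  ∑ k, A k * ρ * (A k)ᴴ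

/-- The difference `M = N − D` with the depolarizing channel. -/
noncomputable def diffMap {K din dout : ℕ} (A : Fin K → Matrix (Fin dout) (Fin din) ℂ)
    (ρ : Matrix (Fin din) (Fin din) ℂ) : Matrix (Fin dout) (Fin dout) ℂ :=
  krausMap A ρ - (ρ.trace * (dout : ℂ)⁻¹) • 1

/-- The Choi state `J_N` of `N`. -/
noncomputable def choi {K din dout : ℕ} (A : Fin K → Matrix (Fin dout) (Fin din) ℂ) :
    Matrix (Fin din × Fin dout) (Fin din × Fin dout) ℂ :=
  Matrix.of fun p q =>
    (din : ℂ)⁻¹ * (krausMap A (Matrix.single p.1 q.1 1)) p.2 q.2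

/-- The squared Hilbert–Schmidt norm `‖M‖₂² = Tr(Mᴴ M)`. -/
noncomputable def hsNormSq {n : Type*} [Fintype n] (M : Matrix n n ℂ) : ℝ :=
  ((Mᴴ * M).trace).re

lemma sum6 {d1 d2 K : ℕ} (f : Fin d1 → Fin d1 → Fin d2 → Fin d2 → Fin K → Fin K → ℂ) :
    ∑ x, ∑ y, ∑ u, ∑ v, ∑ l, ∑ k, f x y u v l k
      = ∑ l, ∑ k, ∑ x, ∑ y, ∑ u, ∑ v, f x y u v l k := by
  calc ∑ x, ∑ y, ∑ u, ∑ v, ∑ l, ∑ k, f x y u v l k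
      = ∑ x, ∑ y, ∑ u, ∑ l, ∑ v, ∑ k, f x y u v l k :=
        Finset.sum_congr rfl fun x _ => Finset.sum_congr rfl fun y _ =>
          Finset.sum_congr rfl fun u _ => Finset.sum_comm
    _ = ∑ x, ∑ y, ∑ l, ∑ u, ∑ v, ∑ k, f x y u v l k :=
        Finset.sum_congr rfl fun x _ => Finset.sum_congr rfl fun y _ => Finset.sum_comm
    _ = ∑ x, ∑ l, ∑ y, ∑ u, ∑ v, ∑ k, f x y u v l k :=
        Finset.sum_congr rfl fun x _ => Finset.sum_comm
    _ = ∑ l, ∑ x, ∑ y, ∑ u, ∑ v, ∑ k, f x y u v l k := Finset.sum_comm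
    _ = ∑ l, ∑ x, ∑ y, ∑ u, ∑ k, ∑ v, f x y u v l k :=
        Finset.sum_congr rfl fun l _ => Finset.sum_congr rfl fun x _ =>
          Finset.sum_congr rfl fun y _ => Finset.sum_congr rfl fun u _ => Finset.sum_comm
    _ = ∑ l, ∑ x, ∑ y, ∑ k, ∑ u, ∑ v, f x y u v l k :=
        Finset.sum_congr rfl fun l _ => Finset.sum_congr rfl fun x _ =>
          Finset.sum_congr rfl fun y _ => Finset.sum_comm
    _ = ∑ l, ∑ x, ∑ k, ∑ y, ∑ u, ∑ v, f x y u v l k :=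
        Finset.sum_congr rfl fun l _ => Finset.sum_congr rfl fun x _ => Finset.sum_comm
    _ = ∑ l, ∑ k, ∑ x, ∑ y, ∑ u, ∑ v, f x y u v l k :=
        Finset.sum_congr rfl fun l _ => Finset.sum_comm

section
variable {K din dout : ℕ} (A : Fin K → Matrix (Fin dout) (Fin din) ℂ)

lemma kraus_entry (x y : Fin din) (a b : Fin dout) :
    krausMap A (Matrix.single x y 1) a b
      = ∑ k, A k a x * (starRingEnd ℂ) (A k b y) := by
  unfold krausMap
  simp [Matrix.sum_apply, Matrix.mul_apply, Matrix.single, Matrix.conjTranspose_apply,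
    ite_and, Finset.mul_sum, Finset.sum_mul]

lemma diff_entry (x y : Fin din) (a b : Fin dout) :
    diffMap A (Matrix.single x y 1) a b
      = (∑ k, A k a x * (starRingEnd ℂ) (A k b y))
        - (if x = y then 1 else 0) * (dout : ℂ)⁻¹ * (if a = b then 1 else 0) := by
  unfold diffMap
  rw [Matrix.sub_apply, kraus_entry]
  simp [Matrix.smul_apply, Matrix.one_apply, Matrix.trace, Matrix.diag, Matrix.single,
    ite_and, mul_comm]
  by_cases hab : a = b <;> by_cases hxy : x = y <;> simp_all [eq_comm]

lemma trc_eq (k l : Fin K) :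
    ((A k)ᴴ * A l).trace = ∑ x, ∑ a, (starRingEnd ℂ) (A k a x) * A l a x := by
  simp [Matrix.trace, Matrix.diag, Matrix.mul_apply, Matrix.conjTranspose_apply]

lemma trc_conj (k l : Fin K) :
    (starRingEnd ℂ) (((A k)ᴴ * A l).trace) = ((A l)ᴴ * A k).trace := by
  simp only [trc_eq, map_sum, _root_.map_mul, Complex.conj_conj]
  exact Finset.sum_congr rfl fun x _ => Finset.sum_congr rfl fun a _ => mul_comm _ _

lemma key_diag (hA : ∑ k, (A k)ᴴ * A k = 1) :
    ∑ x : Fin din, ∑ a : Fin dout, ∑ k : Fin K, (starRingEnd ℂ) (A k a x) * A k a x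
      = (din : ℂ) := by
  have h := congrArg Matrix.trace hA
  simp only [Matrix.trace_sum, trc_eq, Matrix.trace_one] at h
  calc ∑ x : Fin din, ∑ a : Fin dout, ∑ k : Fin K, (starRingEnd ℂ) (A k a x) * A k a x
      = ∑ x : Fin din, ∑ k : Fin K, ∑ a : Fin dout, (starRingEnd ℂ) (A k a x) * A k a x :=
        Finset.sum_congr rfl fun x _ => Finset.sum_comm
    _ = ∑ k : Fin K, ∑ x : Fin din, ∑ a : Fin dout, (starRingEnd ℂ) (A k a x) * A k a x :=
        Finset.sum_comm
    _ = (din : ℂ) := by simpa using h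

lemma h1lem :
    (∑ x : Fin din, ∑ y : Fin din, ∑ a : Fin dout, ∑ b : Fin dout,
        (∑ l, (starRingEnd ℂ) (A l a x) * A l b y) *
        (∑ k, A k a x * (starRingEnd ℂ) (A k b y)))
      = ∑ k, ∑ l, (starRingEnd ℂ) (((A k)ᴴ * A l).trace) * ((A k)ᴴ * A l).trace := by
  calc (∑ x : Fin din, ∑ y : Fin din, ∑ a : Fin dout, ∑ b : Fin dout,
        (∑ l, (starRingEnd ℂ) (A l a x) * A l b y) *
        (∑ k, A k a x * (starRingEnd ℂ) (A k b y)))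
      = ∑ x : Fin din, ∑ y : Fin din, ∑ a : Fin dout, ∑ b : Fin dout, ∑ l, ∑ k,
          ((starRingEnd ℂ) (A l a x) * A k a x) * (A l b y * (starRingEnd ℂ) (A k b y)) := by
        simp only [Finset.sum_mul_sum]
        exact Finset.sum_congr rfl fun x _ => Finset.sum_congr rfl fun y _ =>
          Finset.sum_congr rfl fun a _ => Finset.sum_congr rfl fun b _ =>
          Finset.sum_congr rfl fun l _ => Finset.sum_congr rfl fun k _ => by ring
    _ = ∑ l, ∑ k, ∑ x : Fin din, ∑ y : Fin din, ∑ a : Fin dout, ∑ b : Fin dout,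
          ((starRingEnd ℂ) (A l a x) * A k a x) * (A l b y * (starRingEnd ℂ) (A k b y)) :=
        sum6 _
    _ = ∑ l, ∑ k, (∑ x, ∑ a, (starRingEnd ℂ) (A l a x) * A k a x) *
          (∑ y, ∑ b, A l b y * (starRingEnd ℂ) (A k b y)) := by
        simp only [Finset.sum_mul_sum]
    _ = ∑ l, ∑ k, ((A l)ᴴ * A k).trace * (starRingEnd ℂ) (((A l)ᴴ * A k).trace) := by
        simp only [trc_eq, map_sum, _root_.map_mul, Complex.conj_conj]
    _ = ∑ k, ∑ l, (starRingEnd ℂ) (((A k)ᴴ * A l).trace) * ((A k)ᴴ * A l).trace := by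
        rw [Finset.sum_comm]
        exact Finset.sum_congr rfl fun k _ => Finset.sum_congr rfl fun l _ => by
          rw [trc_conj A l k, ← trc_conj A k l]

lemma h2lem (hA : ∑ k, (A k)ᴴ * A k = 1) :
    (∑ x : Fin din, ∑ y : Fin din, ∑ a : Fin dout, ∑ b : Fin dout,
        (∑ l, (starRingEnd ℂ) (A l a x) * A l b y) *
          ((if x = y then 1 else 0) * (dout : ℂ)⁻¹ * (if a = b then 1 else 0)))
      = (din : ℂ) * (dout : ℂ)⁻¹ := by
  simp only [mul_ite, mul_one, mul_zero, ite_mul, zero_mul, one_mul,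
    Finset.sum_ite_irrel, Finset.sum_const_zero,
    Finset.sum_ite_eq, Finset.sum_ite_eq', Finset.mem_univ, if_true]
  rw [← key_diag A hA, Finset.sum_mul]
  exact Finset.sum_congr rfl fun x _ => by rw [Finset.sum_mul]

lemma h3lem (hA : ∑ k, (A k)ᴴ * A k = 1) :
    (∑ x : Fin din, ∑ y : Fin din, ∑ a : Fin dout, ∑ b : Fin dout,
        ((if x = y then 1 else 0) * (dout : ℂ)⁻¹ * (if a = b then 1 else 0)) *
          (∑ k, A k a x * (starRingEnd ℂ) (A k b y)))
      = (din : ℂ) * (dout : ℂ)⁻¹ := by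
  simp only [mul_ite, mul_one, mul_zero, ite_mul, zero_mul, one_mul,
    Finset.sum_ite_irrel, Finset.sum_const_zero,
    Finset.sum_ite_eq, Finset.sum_ite_eq', Finset.mem_univ, if_true]
  have h : ∀ (x : Fin din) (a : Fin dout),
      (∑ k, A k a x * (starRingEnd ℂ) (A k a x)) = ∑ k, (starRingEnd ℂ) (A k a x) * A k a x :=
    fun x a => Finset.sum_congr rfl fun k _ => mul_comm _ _
  calc ∑ x : Fin din, ∑ a : Fin dout, (dout : ℂ)⁻¹ * ∑ k, A k a x * (starRingEnd ℂ) (A k a x)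
      = (dout : ℂ)⁻¹ * ∑ x : Fin din, ∑ a : Fin dout, ∑ k, (starRingEnd ℂ) (A k a x) * A k a x := by
        rw [Finset.mul_sum]
        refine Finset.sum_congr rfl fun x _ => ?_
        rw [Finset.mul_sum]
        exact Finset.sum_congr rfl fun a _ => by rw [h]
    _ = (din : ℂ) * (dout : ℂ)⁻¹ := by rw [key_diag A hA, mul_comm]

lemma h4lem (hdout : 0 < dout) :
    (∑ x : Fin din, ∑ y : Fin din, ∑ a : Fin dout, ∑ b : Fin dout,
        ((if x = y then 1 else 0) * (dout : ℂ)⁻¹ * (if a = b then 1 else 0)) *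
          ((if x = y then 1 else 0) * (dout : ℂ)⁻¹ * (if a = b then 1 else 0)))
      = (din : ℂ) * (dout : ℂ)⁻¹ := by
  have hd : (dout : ℂ) ≠ 0 := Nat.cast_ne_zero.mpr hdout.ne'
  simp only [mul_ite, mul_one, mul_zero, ite_mul, zero_mul, one_mul,
    Finset.sum_ite_irrel, Finset.sum_const_zero,
    Finset.sum_ite_eq, Finset.sum_ite_eq', Finset.mem_univ, if_true]
  simp [Finset.sum_const, Finset.card_univ]
  field_simp
  simp

lemma main_c (hdout : 0 < dout) (hA : ∑ k, (A k)ᴴ * A k = 1) :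
    (∑ x : Fin din, ∑ y : Fin din, ∑ a : Fin dout, ∑ b : Fin dout,
        (starRingEnd ℂ) (diffMap A (Matrix.single x y 1) a b) *
          diffMap A (Matrix.single x y 1) a b)
      = (∑ k, ∑ l, (starRingEnd ℂ) (((A k)ᴴ * A l).trace) * ((A k)ᴴ * A l).trace)
          - (din : ℂ) * (dout : ℂ)⁻¹ := by
  have expand : ∀ (x y : Fin din) (a b : Fin dout),
      (starRingEnd ℂ) (diffMap A (Matrix.single x y 1) a b) *
        diffMap A (Matrix.single x y 1) a b
      = (∑ l, (starRingEnd ℂ) (A l a x) * A l b y) *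
          (∑ k, A k a x * (starRingEnd ℂ) (A k b y))
        - (∑ l, (starRingEnd ℂ) (A l a x) * A l b y) *
            ((if x = y then 1 else 0) * (dout : ℂ)⁻¹ * (if a = b then 1 else 0))
        - ((if x = y then 1 else 0) * (dout : ℂ)⁻¹ * (if a = b then 1 else 0)) *
            (∑ k, A k a x * (starRingEnd ℂ) (A k b y))
        + ((if x = y then 1 else 0) * (dout : ℂ)⁻¹ * (if a = b then 1 else 0)) *
            ((if x = y then 1 else 0) * (dout : ℂ)⁻¹ * (if a = b then 1 else 0)) := by
    intro x y a b
    rw [diff_entry]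
    have hc : (starRingEnd ℂ)
        ((if x = y then (1:ℂ) else 0) * (dout : ℂ)⁻¹ * (if a = b then (1:ℂ) else 0))
        = (if x = y then (1:ℂ) else 0) * (dout : ℂ)⁻¹ * (if a = b then (1:ℂ) else 0) := by
      simp [apply_ite (starRingEnd ℂ)]
    rw [map_sub, hc]
    simp only [map_sum, _root_.map_mul, Complex.conj_conj]
    ring
  simp only [expand, Finset.sum_sub_distrib, Finset.sum_add_distrib]
  rw [h1lem A, h2lem A hA, h3lem A hA, h4lem (din := din) hdout]
  ring

lemma hsNormSq_eq {n : Type*} [Fintype n] (M : Matrix n n ℂ) :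
    hsNormSq M = ∑ i, ∑ j, Complex.normSq (M i j) := by
  have : (Mᴴ * M).trace = ((∑ j, ∑ i, Complex.normSq (M i j) : ℝ) : ℂ) := by
    simp [Matrix.trace, Matrix.diag, Matrix.mul_apply, Matrix.conjTranspose_apply,
      Complex.normSq_eq_conj_mul_self]
  rw [hsNormSq, this, Complex.ofReal_re, Finset.sum_comm]

end

/-- The quantity `η² = ∑_{k,l} |Tr(Aₖᴴ Aₗ)|² − d_in/d_out` equals
`∑_{x,y} ‖M(|x⟩⟨y|)‖₂²` and also equals `d_in²·‖J_N − I/(d_in d_out)‖₂²`. -/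
theorem stmt7 {K din dout : ℕ} (hdin : 0 < din) (hdout : 0 < dout)
    (A : Fin K → Matrix (Fin dout) (Fin din) ℂ)
    (hA : ∑ k, (A k)ᴴ * A k = 1) :
    ((∑ k, ∑ l, ‖((A k)ᴴ * A l).trace‖ ^ 2) - (din : ℝ) / (dout : ℝ)
        = ∑ x : Fin din, ∑ y : Fin din,
            hsNormSq (diffMap A (Matrix.single x y 1)))
    ∧ ((∑ k, ∑ l, ‖((A k)ᴴ * A l).trace‖ ^ 2) - (din : ℝ) / (dout : ℝ)
        = (din : ℝ) ^ 2 *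
            hsNormSq (choi A - ((((din : ℝ) * (dout : ℝ) : ℝ) : ℂ))⁻¹ • 1)) := by
  have hz : ∀ z : ℂ, ((starRingEnd ℂ) z * z).re = Complex.normSq z := fun z => by
    simp [Complex.mul_re, Complex.normSq_apply]
  have hre := congrArg Complex.re (main_c A hdout hA)
  simp only [Complex.re_sum, Complex.sub_re, hz] at hre
  have hcst : ((din : ℂ) * (dout : ℂ)⁻¹).re = (din : ℝ) / (dout : ℝ) := by
    have : ((din : ℂ) * (dout : ℂ)⁻¹) = (((din : ℝ) / (dout : ℝ) : ℝ) : ℂ) := by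
      push_cast; ring
    rw [this, Complex.ofReal_re]
  rw [hcst] at hre
  have part1 : (∑ k, ∑ l, ‖((A k)ᴴ * A l).trace‖ ^ 2) - (din : ℝ) / (dout : ℝ)
      = ∑ x : Fin din, ∑ y : Fin din,
          hsNormSq (diffMap A (Matrix.single x y 1)) := by
    simp only [Complex.sq_norm, hsNormSq_eq]
    exact hre.symm
  refine ⟨part1, ?_⟩
  rw [part1]
  have hdinC : (din : ℂ) ≠ 0 := Nat.cast_ne_zero.mpr hdin.ne'
  have hdinR : (din : ℝ) ≠ 0 := Nat.cast_ne_zero.mpr hdin.ne'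
  have hentry : ∀ p q : Fin din × Fin dout,
      (choi A - ((((din : ℝ) * (dout : ℝ) : ℝ) : ℂ))⁻¹ • 1) p q
        = (din : ℂ)⁻¹ * diffMap A (Matrix.single p.1 q.1 1) p.2 q.2 := by
    intro p q
    rw [Matrix.sub_apply, diff_entry]
    simp only [choi, Matrix.of_apply, Matrix.smul_apply, Matrix.one_apply, kraus_entry,
      Prod.ext_iff]
    push_cast
    rw [mul_inv]
    by_cases h1 : p.1 = q.1 <;> by_cases h2 : p.2 = q.2 <;> simp [h1, h2] <;> ring
  have h2 : (din : ℝ) ^ 2 * hsNormSq (choi A - ((((din : ℝ) * (dout : ℝ) : ℝ) : ℂ))⁻¹ • 1)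
      = ∑ p : Fin din × Fin dout, ∑ q : Fin din × Fin dout,
          Complex.normSq (diffMap A (Matrix.single p.1 q.1 1) p.2 q.2) := by
    rw [hsNormSq_eq]
    simp only [hentry, Complex.normSq_mul, Complex.normSq_inv, Complex.normSq_natCast]
    rw [Finset.mul_sum]
    refine Finset.sum_congr rfl fun p _ => ?_
    rw [Finset.mul_sum]
    refine Finset.sum_congr rfl fun q _ => ?_
    rw [← mul_assoc]
    field_simp
  rw [h2]
  calc ∑ x : Fin din, ∑ y : Fin din, hsNormSq (diffMap A (Matrix.single x y 1))
      = ∑ x : Fin din, ∑ y : Fin din, ∑ a : Fin dout, ∑ b : Fin dout,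
          Complex.normSq (diffMap A (Matrix.single x y 1) a b) :=
        Finset.sum_congr rfl fun x _ => Finset.sum_congr rfl fun y _ => hsNormSq_eq _
    _ = ∑ x : Fin din, ∑ a : Fin dout, ∑ y : Fin din, ∑ b : Fin dout,
          Complex.normSq (diffMap A (Matrix.single x y 1) a b) :=
        Finset.sum_congr rfl fun x _ => Finset.sum_comm
    _ = ∑ p : Fin din × Fin dout, ∑ q : Fin din × Fin dout,
          Complex.normSq (diffMap A (Matrix.single p.1 q.1 1) p.2 q.2) := by
        simp only [Fintype.sum_prod_type]
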